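/- Let q ∈ ℂ with q ≠ 0 and |q| ≠ 1, and let n ∈ ℤ. Let P, Q ∈ ℂ[X] be nonzero coprime polynomials satisfying the polynomial identity P(q·X)·Q(X) = q^n·Q(q·X)·P(X), where P(q·X) denotes the composition of P with the polynomial q·X and q^n is the integer power. Then P and Q have no zeros in ℂ∖{0}, and there exists c ∈ ℂ with c ≠ 0 such that P(z)/Q(z) = c·z^n for every z ≠ 0. -/

import Mathlib

open Polynomial

private lemma abs_zpow_inj {q : ℂ} (hq0 : q ≠ 0) (hq1 : ‖q‖ ≠ 1)
    {a b : ℤ} (h : q ^ a = q ^ b) : a = b := by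
  have habs : ‖q‖ ^ a = ‖q‖ ^ b := by
    rw [← norm_zpow, ← norm_zpow, h]
  exact zpow_right_injective₀ (norm_pos_iff.mpr hq0) hq1 habs

private lemma only_zero_root {R : Polynomial ℂ} (_hR : R ≠ 0)
    (h : ∀ z : ℂ, z ≠ 0 → R.eval z ≠ 0) :
    R = Polynomial.C R.leadingCoeff * Polynomial.X ^ R.natDegree := by
  have hsplit : Splits R := IsAlgClosed.splits R
  have hroots : R.roots = Multiset.replicate R.natDegree 0 := by
    rw [Multiset.eq_replicate]
    constructor
    · simpa using hsplit.natDegree_eq_card_roots.symm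
    · intro b hb
      by_contra hb0
      exact h b hb0 (isRoot_of_mem_roots hb)
  have := hsplit.eq_prod_roots
  rw [hroots] at this
  simpa [Multiset.map_replicate, Multiset.prod_replicate] using this

theorem stmt_16 (q : ℂ) (hq0 : q ≠ 0) (hq1 : ‖q‖ ≠ 1) (n : ℤ)
    (P Q : Polynomial ℂ) (hP : P ≠ 0) (hQ : Q ≠ 0) (hcop : IsCoprime P Q)
    (heq : P.comp (Polynomial.C q * Polynomial.X) * Q =
      Polynomial.C (q ^ n) * (Q.comp (Polynomial.C q * Polynomial.X)) * P) :
    (∀ z : ℂ, z ≠ 0 → P.eval z ≠ 0) ∧ (∀ z : ℂ, z ≠ 0 → Q.eval z ≠ 0) ∧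
      ∃ c : ℂ, c ≠ 0 ∧ ∀ z : ℂ, z ≠ 0 → P.eval z / Q.eval z = c * z ^ n := by
  have key : ∀ w : ℂ, P.eval (q * w) * Q.eval w = q ^ n * Q.eval (q * w) * P.eval w := by
    intro w
    have := congrArg (Polynomial.eval w) heq
    simpa [Polynomial.eval_comp] using this
  -- coprimality gives no common roots
  obtain ⟨u, v, huv⟩ := hcop
  have nocommon : ∀ z : ℂ, P.eval z = 0 → Q.eval z ≠ 0 := by
    intro z hPz hQz
    have := congrArg (Polynomial.eval z) huv
    simp [hPz, hQz] at this
  have nocommon' : ∀ z : ℂ, Q.eval z = 0 → P.eval z ≠ 0 := by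
    intro z hQz hPz
    have := congrArg (Polynomial.eval z) huv
    simp [hPz, hQz] at this
  have hqn : q ^ n ≠ 0 := zpow_ne_zero n hq0
  -- P has no nonzero roots
  have hPz : ∀ z : ℂ, z ≠ 0 → P.eval z ≠ 0 := by
    intro z hz hPz
    have chain : ∀ k : ℕ, P.eval (q ^ k * z) = 0 := by
      intro k
      induction k with
      | zero => simpa using hPz
      | succ k ih =>
        have hQ' : Q.eval (q ^ k * z) ≠ 0 := nocommon _ ih
        have := key (q ^ k * z)
        rw [ih, mul_zero] at this
        have : P.eval (q * (q ^ k * z)) = 0 := by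
          rcases mul_eq_zero.mp this with h | h
          · exact h
          · exact absurd h hQ'
        simpa [pow_succ, mul_assoc, mul_comm, mul_left_comm] using this
    apply hP
    apply Polynomial.eq_zero_of_infinite_isRoot
    apply Set.infinite_of_injective_forall_mem (f := fun k : ℕ => q ^ k * z)
    case hi =>
      intro i j hij
      have : q ^ (i : ℤ) = q ^ (j : ℤ) := by
        have := mul_right_cancel₀ hz hij
        simpa using this
      exact_mod_cast abs_zpow_inj hq0 hq1 this
    case hf => intro k; exact chain k
  -- Q has no nonzero roots
  have hQz : ∀ z : ℂ, z ≠ 0 → Q.eval z ≠ 0 := by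
    intro z hz hQz
    have chain : ∀ k : ℕ, Q.eval (q ^ k * z) = 0 := by
      intro k
      induction k with
      | zero => simpa using hQz
      | succ k ih =>
        have hP' : P.eval (q ^ k * z) ≠ 0 := nocommon' _ ih
        have := key (q ^ k * z)
        rw [ih, mul_zero] at this
        have : Q.eval (q * (q ^ k * z)) = 0 := by
          rcases mul_eq_zero.mp this.symm with h | h
          · rcases mul_eq_zero.mp h with h | h
            · exact absurd h hqn
            · exact h
          · exact absurd h hP'
        simpa [pow_succ, mul_assoc, mul_comm, mul_left_comm] using this
    apply hQ
    apply Polynomial.eq_zero_of_infinite_isRoot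
    apply Set.infinite_of_injective_forall_mem (f := fun k : ℕ => q ^ k * z)
    case hi =>
      intro i j hij
      have : q ^ (i : ℤ) = q ^ (j : ℤ) := by
        have := mul_right_cancel₀ hz hij
        simpa using this
      exact_mod_cast abs_zpow_inj hq0 hq1 this
    case hf => intro k; exact chain k
  refine ⟨hPz, hQz, ?_⟩
  -- structure of P and Q
  set p := P.leadingCoeff with hp
  set r := Q.leadingCoeff with hr
  set s := P.natDegree with hs
  set t := Q.natDegree with ht
  have hp0 : p ≠ 0 := Polynomial.leadingCoeff_ne_zero.mpr hP
  have hr0 : r ≠ 0 := Polynomial.leadingCoeff_ne_zero.mpr hQ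
  have hPeq : P = Polynomial.C p * Polynomial.X ^ s := only_zero_root hP hPz
  have hQeq : Q = Polynomial.C r * Polynomial.X ^ t := only_zero_root hQ hQz
  -- evaluate key at 1
  have k1 := key 1
  rw [hPeq, hQeq] at k1
  simp only [Polynomial.eval_mul, Polynomial.eval_pow, Polynomial.eval_C, Polynomial.eval_X,
    mul_one, one_pow] at k1
  -- k1 : p * q^s * r = q^n * (r * q^t) * p
  have hqexp : q ^ (s : ℤ) = q ^ (n + (t : ℤ)) := by
    have h1 : q ^ (s : ℕ) = q ^ n * q ^ (t : ℕ) := by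
      have h2 : (q ^ (s:ℕ)) * (p * r) = (q ^ n * q ^ (t:ℕ)) * (p * r) := by
        linear_combination k1
      exact mul_right_cancel₀ (mul_ne_zero hp0 hr0) h2
    rw [zpow_add₀ hq0, zpow_natCast, zpow_natCast, h1]
  have hst : (s : ℤ) = n + t := abs_zpow_inj hq0 hq1 hqexp
  refine ⟨p / r, div_ne_zero hp0 hr0, ?_⟩
  intro z hz
  rw [hPeq, hQeq]
  simp only [Polynomial.eval_mul, Polynomial.eval_pow, Polynomial.eval_C, Polynomial.eval_X]
  have : z ^ (s : ℤ) = z ^ n * z ^ (t : ℤ) := by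
    rw [← zpow_add₀ hz, ← hst]
  rw [div_eq_iff (by exact mul_ne_zero hr0 (pow_ne_zero _ hz))]
  have hzs : z ^ (s : ℕ) = z ^ n * z ^ (t : ℕ) := by
    rw [← zpow_natCast z s, ← zpow_natCast z t]; exact this
  field_simp [hzs]
  rw [hzs]
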